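/- Under the update P(z_k - z_{k+1}) ∈ F(z_{k+1}) with P symmetric positive definite and F monotone, the infimal subdifferential size dist²_{P^{-1}}(0, F(z_k)) = inf_{w ∈ F(z_k)} ‖w‖²_{P^{-1}} is non-increasing in k: dist²_{P^{-1}}(0, F(z_{k+1})) ≤ dist²_{P^{-1}}(0, F(z_k)). -/

import Mathlib

open Matrix

/-- Quadratic form `⟨v, G v⟩`. -/
def qf {ι : Type*} [Fintype ι] (G : Matrix ι ι ℝ) (v : ι → ℝ) : ℝ := v ⬝ᵥ G.mulVec v

/-- Squared distance (in the quadratic form of `G`) from `0` to a set `S`: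
`dist²_G(0,S) = inf_{w ∈ S} ⟨w, G w⟩`. -/
noncomputable def distSqTo {ι : Type*} [Fintype ι] (G : Matrix ι ι ℝ)
    (S : Set (ι → ℝ)) : ℝ := sInf (qf G '' S)

theorem stmt4 {d : ℕ} (P : Matrix (Fin d) (Fin d) ℝ) (hP : P.PosDef)
    (F : (Fin d → ℝ) → Set (Fin d → ℝ))
    (hmono : ∀ z z' u v, u ∈ F z → v ∈ F z' → 0 ≤ (u - v) ⬝ᵥ (z - z'))
    (hclosed : ∀ z, IsClosed (F z)) (hconvex : ∀ z, Convex ℝ (F z))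
    (z : ℕ → Fin d → ℝ)
    (hstep : ∀ k, P.mulVec (z k - z (k+1)) ∈ F (z (k+1)))
    (hne : (F (z 0)).Nonempty) :
    ∀ k, distSqTo P⁻¹ (F (z (k+1))) ≤ distSqTo P⁻¹ (F (z k)) := by
  intro k
  have hPinv : (P⁻¹).PosDef := hP.inv
  have hnonneg : ∀ v : Fin d → ℝ, 0 ≤ qf P⁻¹ v := fun v => hPinv.posSemidef.dotProduct_mulVec_nonneg v
  set w' : Fin d → ℝ := P.mulVec (z k - z (k+1)) with hw'
  have hw'mem : w' ∈ F (z (k+1)) := hstep k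
  have hFk : (F (z k)).Nonempty := by
    cases k with
    | zero => exact hne
    | succ n => exact ⟨_, hstep n⟩
  have hinv : P⁻¹.mulVec w' = z k - z (k+1) := by
    rw [hw', Matrix.mulVec_mulVec,
      Matrix.nonsing_inv_mul P (isUnit_iff_ne_zero.mpr hP.det_pos.ne'), Matrix.one_mulVec]
  have hsymm : ∀ x y : Fin d → ℝ, x ⬝ᵥ P⁻¹.mulVec y = y ⬝ᵥ P⁻¹.mulVec x := by
    intro x y
    rw [Matrix.dotProduct_mulVec, ← Matrix.mulVec_transpose,
      show (P⁻¹)ᵀ = P⁻¹ from hPinv.1, dotProduct_comm]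
  -- key inequality: qf P⁻¹ w' ≤ qf P⁻¹ w for every w ∈ F (z k)
  have key : ∀ w ∈ F (z k), qf P⁻¹ w' ≤ qf P⁻¹ w := by
    intro w hw
    have hm : 0 ≤ (w - w') ⬝ᵥ (z k - z (k+1)) :=
      hmono (z k) (z (k+1)) w w' hw hw'mem
    have hcross : 0 ≤ (w - w') ⬝ᵥ P⁻¹.mulVec w' := by rw [hinv]; exact hm
    have hexpand : qf P⁻¹ w
        = qf P⁻¹ w' + (w - w') ⬝ᵥ P⁻¹.mulVec w' + w' ⬝ᵥ P⁻¹.mulVec (w - w')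
          + qf P⁻¹ (w - w') := by
      have h0 : w = w' + (w - w') := by ring_nf
      calc qf P⁻¹ w = (w' + (w - w')) ⬝ᵥ P⁻¹.mulVec (w' + (w - w')) := by
            rw [← h0]; rfl
        _ = _ := by
            simp only [qf, Matrix.mulVec_add, dotProduct_add,
              add_dotProduct]
            ring
    have h2 : w' ⬝ᵥ P⁻¹.mulVec (w - w') = (w - w') ⬝ᵥ P⁻¹.mulVec w' := hsymm _ _
    have h3 := hnonneg (w - w')
    rw [hexpand, h2]
    linarith
  have hbdd : BddBelow (qf P⁻¹ '' F (z (k+1))) := by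
    refine ⟨0, ?_⟩
    rintro x ⟨v, _, rfl⟩
    exact hnonneg v
  have h1 : distSqTo P⁻¹ (F (z (k+1))) ≤ qf P⁻¹ w' :=
    csInf_le hbdd ⟨w', hw'mem, rfl⟩
  have h2 : qf P⁻¹ w' ≤ distSqTo P⁻¹ (F (z k)) := by
    refine le_csInf (hFk.image _) ?_
    rintro x ⟨v, hv, rfl⟩
    exact key v hv
  linarith
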